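/- Let U ⊂ ℂ be open with convex complement V = ℂ \ U, and suppose V is bounded or more generally every connected component of U is unbounded. Then for any Borel probability measure μ with compact support contained in V, the harmonic function p_μ is non-constant on every connected component of U and p_μ' is zero-free on U. -/

import Mathlib

open MeasureTheory

-- pointwise bound lemma
lemma re_mul_inv_le (z v w : ℂ) (hzv : z ≠ v) (hzw : z ≠ w)
    (hproj : (inner ℝ (z - v) (w - v) : ℝ) ≤ 0) (R : ℝ) (hR : ‖z - w‖ ≤ R) :
    ((v - z) * (z - w)⁻¹).re ≤ -(Complex.normSq (z - v) / R ^ 2) := by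
  set a := z - w with ha_def
  have ha : a ≠ 0 := sub_ne_zero.mpr hzw
  have hna : 0 < Complex.normSq a := Complex.normSq_pos.mpr ha
  have hre : ((v - z) * a⁻¹).re = ((v - z) * (starRingEnd ℂ) a).re * (Complex.normSq a)⁻¹ := by
    rw [Complex.inv_def, ← mul_assoc, mul_comm ((v - z) * (starRingEnd ℂ) a) _,
      Complex.re_ofReal_mul, mul_comm]
  have hkey : ((v - z) * (starRingEnd ℂ) a).re ≤ -Complex.normSq (z - v) := by
    have hsplit : (v - z) * (starRingEnd ℂ) a
        = -((z - v) * (starRingEnd ℂ) (z - v)) - (z - v) * (starRingEnd ℂ) (v - w) := by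
      have : a = (z - v) + (v - w) := by ring
      rw [this]
      simp only [map_add]
      ring
    have hinner : 0 ≤ ((z - v) * (starRingEnd ℂ) (v - w)).re := by
      have h1 : ((z - v) * (starRingEnd ℂ) (v - w)).re = (inner ℝ (v - w) (z - v) : ℝ) := by
        rw [Complex.inner, mul_comm]
      have h2 : (inner ℝ (v - w) (z - v) : ℝ) = (inner ℝ (z - v) (v - w) : ℝ) :=
        real_inner_comm _ _
      have h3 : (inner ℝ (z - v) (v - w) : ℝ) = -(inner ℝ (z - v) (w - v) : ℝ) := by
        rw [show v - w = -(w - v) by ring, inner_neg_right]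
      rw [h1, h2, h3]
      linarith
    rw [hsplit]
    have : ((z - v) * (starRingEnd ℂ) (z - v)).re = Complex.normSq (z - v) := by
      rw [Complex.mul_conj]; simp
    simp only [Complex.sub_re, Complex.neg_re, this]
    linarith
  rw [hre]
  have hRpos : 0 < R := lt_of_lt_of_le (norm_pos_iff.mpr ha) hR
  have hnaR : Complex.normSq a ≤ R ^ 2 := by
    rw [Complex.normSq_eq_norm_sq]
    exact pow_le_pow_left₀ (norm_nonneg _) hR 2
  have hδpos : 0 < Complex.normSq (z - v) := Complex.normSq_pos.mpr (sub_ne_zero.mpr hzv)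
  calc ((v - z) * (starRingEnd ℂ) a).re * (Complex.normSq a)⁻¹
      ≤ -Complex.normSq (z - v) * (Complex.normSq a)⁻¹ := by
        apply mul_le_mul_of_nonneg_right hkey (by positivity)
    _ ≤ -(Complex.normSq (z - v) / R ^ 2) := by
        rw [neg_mul, neg_le_neg_iff, div_eq_mul_inv]
        apply mul_le_mul_of_nonneg_left _ hδpos.le
        exact inv_anti₀ (by positivity) hnaR

theorem stmt11 (U : Set ℂ) (hU : IsOpen U)
    (V : Set ℂ) (hV : V = Uᶜ) (hVcv : Convex ℝ V)
    (hcomp : ∀ z ∈ U, ¬ Bornology.IsBounded (connectedComponentIn U z))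
    (μ : Measure ℂ) [IsProbabilityMeasure μ]
    (S : Set ℂ) (hS : IsCompact S) (hSV : S ⊆ V) (hsupp : μ Sᶜ = 0) :
    (∀ z ∈ U, (∫ w, (z - w)⁻¹ ∂μ) ≠ 0) ∧
    ∀ z ∈ U, ∃ x ∈ connectedComponentIn U z, ∃ y ∈ connectedComponentIn U z,
      (∫ w, Real.log (‖x - w‖) ∂μ) ≠
        ∫ w, Real.log (‖y - w‖) ∂μ := by
  have hμS : μ.restrict S = μ :=
    Measure.restrict_eq_self_of_ae_mem (mem_ae_iff.mpr hsupp)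
  have hSmeas : MeasurableSet S := hS.isClosed.measurableSet
  have hμSone : (μ S).toReal = 1 := by
    have : μ S = 1 := by
      have := measure_add_measure_compl (μ := μ) hSmeas
      rw [hsupp, add_zero] at this
      rw [this, measure_univ]
    simp [this]
  have hSne : S.Nonempty := by
    rcases Set.eq_empty_or_nonempty S with h | h
    · exfalso
      rw [h, Set.compl_empty, measure_univ] at hsupp
      exact one_ne_zero hsupp
    · exact h
  have hVclosed : IsClosed V := by rw [hV]; exact hU.isClosed_compl
  -- bound for S
  obtain ⟨C, hC⟩ := isBounded_iff_forall_norm_le.mp hS.isBounded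
  constructor
  · -- part 1
    intro z hz hzero
    have hzV : z ∉ V := by rw [hV]; simpa using hz
    have hzS : ∀ w ∈ S, z ≠ w := fun w hw h => hzV (h ▸ hSV hw)
    -- projection
    obtain ⟨v, hvV, hvmin⟩ :=
      exists_norm_eq_iInf_of_complete_convex ⟨_, hSV hSne.choose_spec⟩
        hVclosed.isComplete hVcv z
    have hproj : ∀ w ∈ V, (inner ℝ (z - v) (w - v) : ℝ) ≤ 0 :=
      (norm_eq_iInf_iff_real_inner_le_zero hVcv hvV).mp hvmin
    have hzv : z ≠ v := fun h => hzV (h ▸ hvV)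
    set R : ℝ := ‖z‖ + C with hR_def
    have hRb : ∀ w ∈ S, ‖z - w‖ ≤ R := fun w hw =>
      (norm_sub_le z w).trans (by have := hC w hw; linarith)
    -- pointwise bound
    have hpt : ∀ w ∈ S, ((v - z) * (z - w)⁻¹).re ≤ -(Complex.normSq (z - v) / R ^ 2) :=
      fun w hw => re_mul_inv_le z v w hzv (hzS w hw) (hproj w (hSV hw)) R (hRb w hw)
    -- integrability
    have hcont : ContinuousOn (fun w => (v - z) * (z - w)⁻¹) S := by
      apply ContinuousOn.mul continuousOn_const
      exact ((continuous_const.sub continuous_id).continuousOn).inv₀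
        (fun w hw => sub_ne_zero.mpr (hzS w hw))
    have hint : IntegrableOn (fun w => (v - z) * (z - w)⁻¹) S μ :=
      hcont.integrableOn_compact hS
    have hint' : Integrable (fun w => (v - z) * (z - w)⁻¹) μ := by
      rw [← hμS]; exact hint
    -- the integral of f is 0
    have hIzero : (∫ w, (v - z) * (z - w)⁻¹ ∂μ) = 0 := by
      rw [integral_const_mul, hzero, mul_zero]
    have hIre : (∫ w, ((v - z) * (z - w)⁻¹).re ∂μ) = 0 := by
      have := integral_re (𝕜 := ℂ) hint'
      rw [hIzero] at this
      simpa using this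
    -- but the integral of re f is ≤ -c < 0
    have hδpos : 0 < Complex.normSq (z - v) := Complex.normSq_pos.mpr (sub_ne_zero.mpr hzv)
    have hRpos : 0 < R := by
      obtain ⟨w₀, hw₀⟩ := hSne
      have h1 : 0 < ‖z - w₀‖ := norm_pos_iff.mpr (sub_ne_zero.mpr (hzS w₀ hw₀))
      exact lt_of_lt_of_le h1 (hRb w₀ hw₀)
    have hc : (0:ℝ) < Complex.normSq (z - v) / R ^ 2 := by positivity
    have hle : (Complex.normSq (z - v) / R ^ 2) * (μ S).toReal
        ≤ ∫ w in S, -((v - z) * (z - w)⁻¹).re ∂μ := by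
      apply setIntegral_ge_of_const_le_real hSmeas (measure_ne_top μ S)
      · intro w hw
        have := hpt w hw
        linarith
      · exact ((hint.re).neg)
    rw [integral_neg] at hle
    have hre_int : (∫ w in S, ((v - z) * (z - w)⁻¹).re ∂μ)
        = ∫ w, ((v - z) * (z - w)⁻¹).re ∂μ := by rw [hμS]
    rw [hre_int, hIre, hμSone] at hle
    simp at hle
    linarith
  · -- part 2
    intro z hz
    refine ⟨z, mem_connectedComponentIn hz, ?_⟩
    set pz : ℝ := ∫ w, Real.log (‖z - w‖) ∂μ with hpz_def
    have hC0 : 0 ≤ C := le_trans (norm_nonneg _) (hC _ hSne.choose_spec)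
    -- get y in the component with big norm
    have hub := hcomp z hz
    rw [isBounded_iff_forall_norm_le] at hub
    push_neg at hub
    obtain ⟨y, hy, hynorm⟩ := hub (C + Real.exp pz + 1)
    refine ⟨y, hy, ?_⟩
    have hyw : ∀ w ∈ S, Real.exp pz + 1 < ‖y - w‖ := by
      intro w hw
      have h1 : ‖y‖ - ‖w‖ ≤ ‖y - w‖ := norm_sub_norm_le y w
      have := hC w hw
      linarith
    have hexp : (0:ℝ) < Real.exp pz := Real.exp_pos _
    have hconty : ContinuousOn (fun w => Real.log (‖y - w‖)) S := by
      apply ContinuousOn.log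
      · exact (continuous_norm.comp (continuous_const.sub continuous_id)).continuousOn
      · intro w hw
        have h1 := hyw w hw
        have h2 : (0:ℝ) < ‖y - w‖ := by linarith
        exact ne_of_gt h2
    have hinty : IntegrableOn (fun w => Real.log (‖y - w‖)) S μ :=
      hconty.integrableOn_compact hS
    set c : ℝ := Real.log (Real.exp pz + 1) with hc_def
    have hpzc : pz < c := by
      rw [hc_def, ← Real.log_exp pz]
      exact Real.log_lt_log (Real.exp_pos _) (by rw [Real.exp_log hexp]; linarith)
    have h1 : c * (μ S).toReal ≤ ∫ w in S, Real.log (‖y - w‖) ∂μ := by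
      apply setIntegral_ge_of_const_le_real hSmeas (measure_ne_top μ S) _ hinty
      intro w hw
      exact Real.log_le_log (by linarith) (le_of_lt (hyw w hw))
    rw [hμSone, mul_one] at h1
    have hgey : pz < ∫ w, Real.log (‖y - w‖) ∂μ := by
      rw [← hμS]
      linarith
    exact ne_of_lt hgey
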